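/- Maximization of even multinomial coefficients over balanced partitions (the inequality binom-estim). Let d, k be positive integers with k ≤ d, and write d = wk + r with integers w ≥ 1 and 0 ≤ r < k. Then for all positive integers b₁,…,b_k with ∑ᵢ bᵢ = d, the multinomial coefficient (2d)!/((2b₁)!⋯(2b_k)!) is at most M(k) := (2d)!/((2w)!^{k−r}·(2(w+1))!^{r}), with equality if and only if the multiset {b₁,…,b_k} consists of r copies of w+1 and k−r copies of w. -/
import Mathlib


/-- **Maximization of even multinomial coefficients over balanced partitions**
(inequality binom-estim). Let `k ≤ d` be positive integers and write `d = wk + r`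
with `w ≥ 1` and `0 ≤ r < k`. Then for all positive integers `b₁,…,b_k` with
`∑ bᵢ = d`, the multinomial coefficient `(2d)!/((2b₁)!⋯(2b_k)!)` is at most
`M(k) = (2d)!/((2w)!^{k−r}·(2(w+1))!^{r})`, with equality iff the multiset
`{b₁,…,b_k}` consists of `r` copies of `w+1` and `k−r` copies of `w`. -/

-- exchange inequality
lemma exch (b c : ℕ) (h : b + 1 ≤ c) :
    (2*c).factorial * (2*(b+1)).factorial < (2*(c+1)).factorial * (2*b).factorial := by
  have e1 : (2*(c+1)).factorial = (2*c+2) * ((2*c+1) * (2*c).factorial) := by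
    rw [show 2*(c+1) = (2*c+1)+1 by ring, Nat.factorial_succ, show 2*c+1 = (2*c)+1 from rfl,
      Nat.factorial_succ]
  have e2 : (2*(b+1)).factorial = (2*b+2) * ((2*b+1) * (2*b).factorial) := by
    rw [show 2*(b+1) = (2*b+1)+1 by ring, Nat.factorial_succ, show 2*b+1 = (2*b)+1 from rfl,
      Nat.factorial_succ]
  have h1 : (2*b+2)*(2*b+1) < (2*c+2)*(2*c+1) := by nlinarith
  have hpos : 0 < (2*c).factorial * (2*b).factorial :=
    Nat.mul_pos (Nat.factorial_pos _) (Nat.factorial_pos _)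
  calc (2*c).factorial * (2*(b+1)).factorial
      = ((2*b+2)*(2*b+1)) * ((2*c).factorial * (2*b).factorial) := by rw [e2]; ring
    _ < ((2*c+2)*(2*c+1)) * ((2*c).factorial * (2*b).factorial) :=
        mul_lt_mul_of_pos_right h1 hpos
    _ = (2*(c+1)).factorial * (2*b).factorial := by rw [e1]; ring

-- flat multisets are balanced
lemma bal_of_flat (w r : ℕ) (s : Multiset ℕ) (hr : r < Multiset.card s)
    (hpos : ∀ x ∈ s, 1 ≤ x) (hsum : s.sum = w * Multiset.card s + r)
    (hflat : ∀ a ∈ s, ∀ b ∈ s, a ≤ b + 1) :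
    s = Multiset.replicate r (w+1) + Multiset.replicate (Multiset.card s - r) w := by
  have hmem : ∀ x ∈ s, x = w ∨ x = w + 1 := by
    intro x hx
    by_contra hcon
    push_neg at hcon
    rcases Nat.lt_or_ge x w with hlt | hge
    · have hw2 : 2 ≤ w := by have := hpos x hx; omega
      have hse : s = x ::ₘ s.erase x := (Multiset.cons_erase hx).symm
      have hbound : ∀ y ∈ s.erase x, y ≤ w := by
        intro y hy
        have := hflat y (Multiset.mem_of_mem_erase hy) x hx
        omega
      have h1 : (s.erase x).sum ≤ Multiset.card (s.erase x) * w := by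
        have := Multiset.sum_le_card_nsmul (s.erase x) w hbound
        simpa [smul_eq_mul] using this
      have hc : Multiset.card (s.erase x) = Multiset.card s - 1 :=
        Multiset.card_erase_of_mem hx
      have hs2 : s.sum = x + (s.erase x).sum := by
        conv_lhs => rw [hse]
        simp
      have hle : w ≤ Multiset.card s * w := Nat.le_mul_of_pos_left w (by omega)
      have hsub : (Multiset.card s - 1) * w = Multiset.card s * w - w := by
        rw [Nat.sub_one_mul]
      rw [hc, hsub] at h1
      rw [mul_comm] at hsum
      omega
    · have hx2 : w + 2 ≤ x := by omega
      have hbig : ∀ y ∈ s, w + 1 ≤ y := by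
        intro y hy
        have := hflat x hx y hy
        omega
      have h1 : Multiset.card s * (w+1) ≤ s.sum := by
        have := Multiset.card_nsmul_le_sum hbig
        simpa [smul_eq_mul] using this
      rw [mul_comm] at hsum
      nlinarith [hsum]
  classical
  have hsplit := Multiset.filter_add_not (fun x => x = w) s
  set s₁ := s.filter (fun x => x = w) with hs1
  set s₂ := s.filter (fun x => ¬ x = w) with hs2
  have h₁ : s₁ = Multiset.replicate (Multiset.card s₁) w := by
    rw [Multiset.eq_replicate]
    exact ⟨rfl, fun b hb => (Multiset.mem_filter.mp hb).2⟩
  have h₂ : s₂ = Multiset.replicate (Multiset.card s₂) (w+1) := by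
    rw [Multiset.eq_replicate]
    refine ⟨rfl, fun b hb => ?_⟩
    have hb' := Multiset.mem_filter.mp hb
    rcases hmem b hb'.1 with h | h
    · exact absurd h hb'.2
    · exact h
  have hcard : Multiset.card s₁ + Multiset.card s₂ = Multiset.card s := by
    rw [← hsplit]; simp
  have hsumeq : Multiset.card s₁ * w + Multiset.card s₂ * (w+1)
      = w * (Multiset.card s₁ + Multiset.card s₂) + r := by
    have hss : s.sum = Multiset.card s₁ * w + Multiset.card s₂ * (w+1) := by
      conv_lhs => rw [← hsplit]
      rw [Multiset.sum_add]
      nth_rewrite 1 [h₁]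
      nth_rewrite 1 [h₂]
      simp [Multiset.sum_replicate, smul_eq_mul]
    rw [← hss, hsum, hcard]
  have hcr : Multiset.card s₂ = r := by nlinarith [hsumeq]
  have hm : Multiset.card s₁ = Multiset.card s - r := by omega
  calc s = s₁ + s₂ := hsplit.symm
    _ = Multiset.replicate r (w+1) + Multiset.replicate (Multiset.card s - r) w := by
        rw [h₁, h₂, hcr, hm, add_comm]

lemma prod_bal (w r m : ℕ) :
    ((Multiset.replicate r (w+1) + Multiset.replicate m w).map
      (fun x => (2*x).factorial)).prod
      = (2*w).factorial ^ m * (2*(w+1)).factorial ^ r := by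
  rw [Multiset.map_add, Multiset.prod_add, Multiset.map_replicate, Multiset.map_replicate,
    Multiset.prod_replicate, Multiset.prod_replicate, mul_comm]

-- main lemma by smoothing
lemma main_lemma (w r n : ℕ) : ∀ s : Multiset ℕ, (s.map (fun x => x*x)).sum = n →
    r < Multiset.card s → (∀ x ∈ s, 1 ≤ x) → s.sum = w * Multiset.card s + r →
    (2*w).factorial ^ (Multiset.card s - r) * (2*(w+1)).factorial ^ r
      ≤ (s.map (fun x => (2*x).factorial)).prod ∧
    ((s.map (fun x => (2*x).factorial)).prod
        = (2*w).factorial ^ (Multiset.card s - r) * (2*(w+1)).factorial ^ r →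
      s = Multiset.replicate r (w+1) + Multiset.replicate (Multiset.card s - r) w) := by
  induction n using Nat.strong_induction_on with
  | _ n ih =>
    intro s hn hr hpos hsum
    by_cases hbal : s = Multiset.replicate r (w+1) + Multiset.replicate (Multiset.card s - r) w
    · have hps : (s.map (fun x => (2*x).factorial)).prod
          = (2*w).factorial ^ (Multiset.card s - r) * (2*(w+1)).factorial ^ r := by
        conv_lhs => rw [hbal]
        rw [prod_bal]
      exact ⟨le_of_eq hps.symm, fun _ => hbal⟩
    · -- find an unbalanced pair
      have hex : ∃ a ∈ s, ∃ b ∈ s.erase a, b + 2 ≤ a := by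
        by_contra hcon
        push_neg at hcon
        apply hbal
        apply bal_of_flat w r s hr hpos hsum
        intro a ha b hb
        by_cases hab : a = b
        · omega
        · have hb' : b ∈ s.erase a := Multiset.mem_erase_of_ne (Ne.symm hab) |>.mpr hb
          have := hcon a ha b hb'
          omega
      obtain ⟨a, ha, b, hb, hab⟩ := hex
      obtain ⟨c, rfl⟩ : ∃ c, a = c + 1 := ⟨a - 1, by omega⟩
      set s₀ := (s.erase (c+1)).erase b with hs0
      have hse : s = (c+1) ::ₘ b ::ₘ s₀ := by
        rw [hs0, Multiset.cons_erase hb, Multiset.cons_erase ha]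
      set s' : Multiset ℕ := c ::ₘ (b+1) ::ₘ s₀ with hs'
      have hcard' : Multiset.card s' = Multiset.card s := by rw [hse, hs']; simp
      have hsum' : s'.sum = s.sum := by rw [hse, hs']; simp; omega
      have hpos' : ∀ x ∈ s', 1 ≤ x := by
        intro x hx
        rw [hs', Multiset.mem_cons, Multiset.mem_cons] at hx
        rcases hx with h | h | h
        · have hb1 : 1 ≤ b := hpos b (by rw [hse]; simp)
          omega
        · omega
        · exact hpos x (by rw [hse]; simp [h])
      have hphi : (s'.map (fun x => x*x)).sum < n := by
        rw [← hn, hse, hs']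
        simp only [Multiset.map_cons, Multiset.sum_cons]
        have hb1 : 1 ≤ b := hpos b (by rw [hse]; simp)
        nlinarith
      have ihres := ih _ hphi s' rfl (by omega) hpos' (by rw [hsum', hcard', hsum])
      have hprodlt : (s'.map (fun x => (2*x).factorial)).prod
          < (s.map (fun x => (2*x).factorial)).prod := by
        rw [hse, hs']
        simp only [Multiset.map_cons, Multiset.prod_cons]
        have hQ : 0 < ((s₀.map (fun x => (2*x).factorial)).prod) := by
          apply Multiset.prod_pos
          intro x hx
          rw [Multiset.mem_map] at hx
          obtain ⟨y, _, rfl⟩ := hx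
          exact Nat.factorial_pos _
        have := exch b c (by omega)
        calc (2*c).factorial * ((2*(b+1)).factorial * (s₀.map (fun x => (2*x).factorial)).prod)
            = ((2*c).factorial * (2*(b+1)).factorial) * (s₀.map (fun x => (2*x).factorial)).prod := by
              ring
          _ < ((2*(c+1)).factorial * (2*b).factorial) * (s₀.map (fun x => (2*x).factorial)).prod :=
              mul_lt_mul_of_pos_right this hQ
          _ = (2*(c+1)).factorial * ((2*b).factorial * (s₀.map (fun x => (2*x).factorial)).prod) := by
              ring
      rw [hcard'] at ihres
      constructor
      · exact le_of_lt (lt_of_le_of_lt ihres.1 hprodlt)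
      · intro heq
        exfalso
        have := lt_of_le_of_lt ihres.1 hprodlt
        omega

theorem multinomial_balanced_max (d k w r : ℕ) (hk : 0 < k) (hkd : k ≤ d)
    (hw : 1 ≤ w) (hr : r < k) (hd : d = w * k + r)
    (b : Fin k → ℕ) (hb : ∀ i, 0 < b i) (hsum : ∑ i, b i = d) :
    ((Nat.factorial (2 * d) : ℝ) / ∏ i, (Nat.factorial (2 * b i) : ℝ)) ≤
        (Nat.factorial (2 * d) : ℝ) /
          ((Nat.factorial (2 * w) : ℝ) ^ (k - r) * (Nat.factorial (2 * (w + 1)) : ℝ) ^ r) ∧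
      (((Nat.factorial (2 * d) : ℝ) / ∏ i, (Nat.factorial (2 * b i) : ℝ)) =
          (Nat.factorial (2 * d) : ℝ) /
            ((Nat.factorial (2 * w) : ℝ) ^ (k - r) * (Nat.factorial (2 * (w + 1)) : ℝ) ^ r) ↔
        (↑(List.ofFn b) : Multiset ℕ) =
          Multiset.replicate r (w + 1) + Multiset.replicate (k - r) w) := by
  set s : Multiset ℕ := ↑(List.ofFn b) with hsdef
  have hcard : Multiset.card s = k := by simp [hsdef]
  have hssum : s.sum = d := by
    rw [hsdef, Multiset.sum_coe, List.sum_ofFn]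
    exact hsum
  have hspos : ∀ x ∈ s, 1 ≤ x := by
    intro x hx
    rw [hsdef] at hx
    simp only [Multiset.mem_coe, List.mem_ofFn] at hx
    obtain ⟨i, rfl⟩ := hx
    exact hb i
  have hmain := main_lemma w r ((s.map (fun x => x*x)).sum) s rfl
    (by omega) hspos (by rw [hssum, hcard, hd])
  rw [hcard] at hmain
  -- relate nat products to real products
  set natP := (s.map (fun x => (2*x).factorial)).prod with hnatP
  set natT := (2*w).factorial ^ (k - r) * (2*(w+1)).factorial ^ r with hnatT
  have hPe : (natP : ℝ) = ∏ i, ((2 * b i).factorial : ℝ) := by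
    have h1 : natP = ∏ i, (2 * b i).factorial := by
      rw [hnatP, hsdef, Multiset.map_coe, List.map_ofFn]
      rw [Multiset.prod_coe, List.prod_ofFn]
      simp [Function.comp]
    rw [h1]
    push_cast
    rfl
  have hTe : (natT : ℝ)
      = ((2*w).factorial : ℝ) ^ (k - r) * ((2*(w+1)).factorial : ℝ) ^ r := by
    rw [hnatT]; push_cast; ring
  have hTpos0 : 0 < natT :=
    Nat.mul_pos (pow_pos (Nat.factorial_pos _) _) (pow_pos (Nat.factorial_pos _) _)
  have hTpos : (0:ℝ) < (natT : ℝ) := by exact_mod_cast hTpos0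
  have hle : (natT : ℝ) ≤ (natP : ℝ) := by exact_mod_cast hmain.1
  have hX : (0:ℝ) < (Nat.factorial (2*d) : ℝ) := by
    exact_mod_cast Nat.factorial_pos _
  rw [← hPe, ← hTe]
  have hPpos : (0:ℝ) < (natP : ℝ) := lt_of_lt_of_le hTpos hle
  constructor
  · apply div_le_div_of_nonneg_left hX.le hTpos hle
  · constructor
    · intro heq
      rw [div_eq_div_iff hPpos.ne' hTpos.ne'] at heq
      have hPT : (natP : ℝ) = (natT : ℝ) := mul_right_cancel₀ hX.ne' (by linarith [heq])
      exact hmain.2 (by exact_mod_cast hPT)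
    · intro hs
      have hPT : natP = natT := by
        rw [hnatP, hs, prod_bal, hnatT]
      rw [hPT]
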